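/- Let A be an n×n copositive matrix and let u be a minimal zero of A with support I = Supp(u). Then for every proper subset J of I, the principal submatrix A_J is positive definite. -/

import Mathlib

open Matrix

/-- A symmetric matrix `A` is copositive if `xᵀ A x ≥ 0` for all entrywise nonnegative `x`. -/
def Copositive {n : ℕ} (A : Matrix (Fin n) (Fin n) ℝ) : Prop :=
  A.IsSymm ∧ ∀ x : Fin n → ℝ, (∀ i, 0 ≤ x i) → 0 ≤ x ⬝ᵥ A.mulVec x

/-- The support of a vector. -/
def Supp {ι : Type*} (u : ι → ℝ) : Set ι := {i | u i ≠ 0}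

/-- A zero of a copositive matrix: a nonzero nonnegative vector `u` with `uᵀ A u = 0`. -/
def IsZeroOf {n : ℕ} (A : Matrix (Fin n) (Fin n) ℝ) (u : Fin n → ℝ) : Prop :=
  u ≠ 0 ∧ (∀ i, 0 ≤ u i) ∧ u ⬝ᵥ A.mulVec u = 0

/-- A minimal zero: a zero such that no zero has support strictly contained in its support. -/
def IsMinimalZeroOf {n : ℕ} (A : Matrix (Fin n) (Fin n) ℝ) (u : Fin n → ℝ) : Prop :=
  IsZeroOf A u ∧ ¬ ∃ v, IsZeroOf A v ∧ Supp v ⊂ Supp u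

/-- The principal submatrix of `A` with rows and columns in `I`. -/
def subMat {n : ℕ} (A : Matrix (Fin n) (Fin n) ℝ) (I : Finset (Fin n)) :
    Matrix {i // i ∈ I} {i // i ∈ I} ℝ :=
  A.submatrix Subtype.val Subtype.val

/-- The subvector of `u` with indices in `I`. -/
def subVec {n : ℕ} (u : Fin n → ℝ) (I : Finset (Fin n)) : {i // i ∈ I} → ℝ :=
  fun i => u i.val

/-- Irreducibility of a copositive matrix `A` with respect to a set `M` of matrices. -/
def IrreducibleWrtSet {n : ℕ} (A : Matrix (Fin n) (Fin n) ℝ)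
    (M : Set (Matrix (Fin n) (Fin n) ℝ)) : Prop :=
  ¬ ∃ γ : ℝ, 0 < γ ∧ ∃ B ∈ M, B ≠ 0 ∧ Copositive (A - γ • B)

/-- Irreducibility of a copositive matrix `A` with respect to a single matrix `M`. -/
def IrreducibleWrtMat {n : ℕ} (A M : Matrix (Fin n) (Fin n) ℝ) : Prop :=
  ¬ ∃ γ : ℝ, 0 < γ ∧ Copositive (A - γ • M)

/-- An extremal element of a cone `K` of vectors. -/
def IsExtremalIn {ι : Type*} (K : Set (ι → ℝ)) (u : ι → ℝ) : Prop :=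
  u ∈ K ∧ u ≠ 0 ∧ ∀ v w, v ∈ K → w ∈ K → u = v + w →
    (∃ a : ℝ, 0 ≤ a ∧ v = a • u) ∧ (∃ b : ℝ, 0 ≤ b ∧ w = b • u)

/-- The matrix with entries 1 at positions `(i,j)` and `(j,i)` and 0 elsewhere. -/
def Eij {n : ℕ} (i j : Fin n) : Matrix (Fin n) (Fin n) ℝ :=
  fun a b => if (a = i ∧ b = j) ∨ (a = j ∧ b = i) then 1 else 0

namespace Stmt8Aux

open Matrix

variable {n : ℕ}

/-- Extension of a vector on a subtype by zero. -/
def extJ (J : Finset (Fin n)) (x : {i // i ∈ J} → ℝ) : Fin n → ℝ :=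
  fun i => if h : i ∈ J then x ⟨i, h⟩ else 0

lemma extJ_mem (J : Finset (Fin n)) (x : {i // i ∈ J} → ℝ) {i : Fin n} (h : i ∈ J) :
    extJ J x i = x ⟨i, h⟩ := dif_pos h

lemma extJ_not_mem (J : Finset (Fin n)) (x : {i // i ∈ J} → ℝ) {i : Fin n} (h : i ∉ J) :
    extJ J x i = 0 := dif_neg h

lemma dot_ext (J : Finset (Fin n)) (x : {i // i ∈ J} → ℝ) (w : Fin n → ℝ) :
    extJ J x ⬝ᵥ w = ∑ i : {i // i ∈ J}, x i * w i.val := by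
  have h1 : ∀ i : {i // i ∈ J}, x i * w i.val = extJ J x i.val * w i.val := by
    intro i; rw [extJ_mem J x i.2]
  rw [Finset.sum_congr rfl (fun i _ => h1 i), Finset.univ_eq_attach,
    Finset.sum_attach J (fun i => extJ J x i * w i), dotProduct]
  refine (Finset.sum_subset (Finset.subset_univ J) ?_).symm
  intro i _ hi
  rw [extJ_not_mem J x hi, zero_mul]

lemma mulVec_ext (A : Matrix (Fin n) (Fin n) ℝ) (J : Finset (Fin n))
    (x : {i // i ∈ J} → ℝ) (i : Fin n) :
    (A.mulVec (extJ J x)) i = ∑ j : {i // i ∈ J}, A i j.val * x j := by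
  have : (A.mulVec (extJ J x)) i = extJ J x ⬝ᵥ (fun j => A i j) := by
    rw [mulVec, dotProduct_comm]
  rw [this, dot_ext]
  exact Finset.sum_congr rfl fun j _ => mul_comm _ _

lemma quad_ext (A : Matrix (Fin n) (Fin n) ℝ) (J : Finset (Fin n)) (x : {i // i ∈ J} → ℝ) :
    extJ J x ⬝ᵥ A.mulVec (extJ J x) = x ⬝ᵥ (subMat A J).mulVec x := by
  rw [dot_ext]
  refine Finset.sum_congr rfl fun i _ => ?_
  rw [mulVec_ext]
  rfl

end Stmt8Aux

theorem stmt8 {n : ℕ} (A : Matrix (Fin n) (Fin n) ℝ) (hA : Copositive A)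
    (u : Fin n → ℝ) (hu : IsMinimalZeroOf A u)
    (I : Finset (Fin n)) (hI : (I : Set (Fin n)) = Supp u)
    (J : Finset (Fin n)) (hJ : J ⊂ I) :
    (subMat A J).PosDef := by
  classical
  obtain ⟨⟨hune, hunn, huq⟩, hmin⟩ := hu
  have hupos : ∀ i ∈ I, 0 < u i := by
    intro i hi
    have h1 : i ∈ Supp u := by rw [← hI]; exact Finset.mem_coe.mpr hi
    exact lt_of_le_of_ne (hunn i) (Ne.symm h1)
  have hJI : J ⊆ I := hJ.1
  obtain ⟨k, hkI, hkJ⟩ := Finset.exists_of_ssubset hJ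
  rw [posDef_iff_dotProduct_mulVec]
  constructor
  · -- Hermitian
    ext i j
    simp only [conjTranspose_apply, subMat, submatrix_apply, star_trivial]
    exact hA.1.apply i.val j.val
  · intro x hx
    have hstar : star x = x := funext fun i => star_trivial _
    rw [hstar, ← Stmt8Aux.quad_ext A J x]
    set xe := Stmt8Aux.extJ J x with hxedef
    set q := xe ⬝ᵥ A.mulVec xe with hqdef
    set c := xe ⬝ᵥ A.mulVec u with hcdef
    obtain ⟨i₀, hi₀⟩ : ∃ i, x i ≠ 0 := Function.ne_iff.mp hx
    set ε := Finset.univ.inf' (Finset.univ_nonempty_iff.mpr ⟨i₀⟩)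
      (fun i : {i // i ∈ J} => u i.val / (|x i| + 1)) with hεdef
    have hε : 0 < ε := by
      rw [hεdef, Finset.lt_inf'_iff]
      intro b _
      exact div_pos (hupos _ (hJI b.2)) (by positivity)
    have hvm : u ᵥ* A = A *ᵥ u := by
      nth_rewrite 1 [← hA.1]
      rw [vecMul_transpose]
    have hsymm : u ⬝ᵥ A.mulVec xe = c := by
      rw [dotProduct_mulVec, hvm, dotProduct_comm]
    have hexp : ∀ t : ℝ,
        (fun i => u i + t * xe i) ⬝ᵥ A.mulVec (fun i => u i + t * xe i)
          = 2*t*c + t^2*q := by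
      intro t
      have h1 : (fun i => u i + t * xe i) = u + t • xe := by
        funext i; simp [smul_eq_mul]
      rw [h1, mulVec_add, mulVec_smul, add_dotProduct, dotProduct_add, dotProduct_add,
        smul_dotProduct, smul_dotProduct, dotProduct_smul, dotProduct_smul,
        huq, hsymm, ← hcdef, ← hqdef, smul_eq_mul, smul_eq_mul, smul_eq_mul]
      ring
    have hg : ∀ t : ℝ, |t| ≤ ε → 0 ≤ 2*t*c + t^2*q := by
      intro t ht
      rw [← hexp t]
      apply hA.2
      intro i
      by_cases hiJ : i ∈ J
      · have h1 : ε ≤ u i / (|x ⟨i, hiJ⟩| + 1) :=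
          Finset.inf'_le _ (Finset.mem_univ (⟨i, hiJ⟩ : {i // i ∈ J}))
        have hxei : xe i = x ⟨i, hiJ⟩ := Stmt8Aux.extJ_mem J x hiJ
        rw [hxei]
        have hua : 0 < u i := hupos i (hJI hiJ)
        have h2 : ε * (|x ⟨i, hiJ⟩| + 1) ≤ u i := (le_div_iff₀ (by positivity)).mp h1
        have h3 : -(|t| * |x ⟨i, hiJ⟩|) ≤ t * x ⟨i, hiJ⟩ := by
          have h4 := neg_abs_le (t * x ⟨i, hiJ⟩); rwa [abs_mul] at h4
        nlinarith [abs_nonneg (x ⟨i, hiJ⟩), abs_nonneg t,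
          mul_le_mul_of_nonneg_right ht (abs_nonneg (x ⟨i, hiJ⟩))]
      · have hxe0 : xe i = 0 := Stmt8Aux.extJ_not_mem J x hiJ
        rw [hxe0, mul_zero, add_zero]; exact hunn i
    have hc0 : c = 0 := by
      by_contra hc
      rcases lt_or_gt_of_ne hc with hneg | hpos
      · set s := min ε (-c/(|q|+1)) with hsdef
        have hs0 : 0 < s := lt_min hε (div_pos (by linarith) (by positivity))
        have h := hg s (by rw [abs_of_pos hs0]; exact min_le_left _ _)
        have h1 : s * (|q|+1) ≤ -c :=
          (le_div_iff₀ (by positivity)).mp (min_le_right ε (-c/(|q|+1)))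
        nlinarith [mul_le_mul_of_nonneg_left (le_abs_self q) (sq_nonneg s),
          mul_le_mul_of_nonneg_left h1 hs0.le, mul_pos hs0 hs0]
      · set s := min ε (c/(|q|+1)) with hsdef
        have hs0 : 0 < s := lt_min hε (div_pos (by linarith) (by positivity))
        have h := hg (-s) (by rw [abs_neg, abs_of_pos hs0]; exact min_le_left _ _)
        have h1 : s * (|q|+1) ≤ c :=
          (le_div_iff₀ (by positivity)).mp (min_le_right ε (c/(|q|+1)))
        nlinarith [mul_le_mul_of_nonneg_left (le_abs_self q) (sq_nonneg s),
          mul_le_mul_of_nonneg_left h1 hs0.le, mul_pos hs0 hs0]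
    have hq0 : 0 ≤ q := by
      have h := hg ε (by rw [abs_of_pos hε])
      rw [hc0] at h
      nlinarith [mul_pos hε hε]
    rcases hq0.lt_or_eq with hlt | hqzero
    · exact hlt
    exfalso
    by_cases hxnn : ∀ i, 0 ≤ x i
    · apply hmin
      refine ⟨xe, ⟨?_, ?_, ?_⟩, ?_⟩
      · intro h0
        apply hi₀
        have h1 := congrFun h0 i₀.val
        rw [hxedef] at h1
        rw [Stmt8Aux.extJ_mem J x i₀.2] at h1
        simpa using h1
      · intro i
        rw [hxedef]
        by_cases hiJ : i ∈ J
        · rw [Stmt8Aux.extJ_mem J x hiJ]; exact hxnn _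
        · rw [Stmt8Aux.extJ_not_mem J x hiJ]
      · exact hqzero.symm
      · constructor
        · intro i hi
          have hiJ : i ∈ J := by
            by_contra h
            exact hi (by rw [hxedef]; exact Stmt8Aux.extJ_not_mem J x h)
          rw [← hI]
          exact Finset.mem_coe.mpr (hJI hiJ)
        · intro hsub
          have hk : k ∈ Supp u := by rw [← hI]; exact Finset.mem_coe.mpr hkI
          exact (hsub hk) (by rw [hxedef]; exact Stmt8Aux.extJ_not_mem J x hkJ)
    · push_neg at hxnn
      obtain ⟨i₁, hi₁⟩ := hxnn
      set S := Finset.univ.filter (fun i : {i // i ∈ J} => x i < 0) with hSdef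
      have hS : S.Nonempty := ⟨i₁, by simp [hSdef, hi₁]⟩
      set t := S.inf' hS (fun i => u i.val / (-x i)) with htdef
      have ht0 : 0 < t := by
        rw [htdef, Finset.lt_inf'_iff]
        intro b hb
        have hbx : x b < 0 := by simpa [hSdef] using hb
        exact div_pos (hupos _ (hJI b.2)) (by linarith)
      obtain ⟨i₂, hi₂S, hi₂⟩ := Finset.exists_mem_eq_inf' hS (fun i => u i.val / (-x i))
      have hxi₂ : x i₂ < 0 := by simpa [hSdef] using hi₂S
      have hvnn : ∀ i, 0 ≤ u i + t * xe i := by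
        intro i
        by_cases hiJ : i ∈ J
        · rw [hxedef, Stmt8Aux.extJ_mem J x hiJ]
          rcases le_or_gt 0 (x ⟨i, hiJ⟩) with h | h
          · have h1 := hunn i
            nlinarith
          · have hmem : (⟨i, hiJ⟩ : {i // i ∈ J}) ∈ S := by simp [hSdef, h]
            have hle : t ≤ u i / (-x ⟨i, hiJ⟩) := by
              rw [htdef]; exact Finset.inf'_le _ hmem
            have h2 := (le_div_iff₀ (by linarith : (0:ℝ) < -x ⟨i, hiJ⟩)).mp hle
            nlinarith
        · rw [hxedef, Stmt8Aux.extJ_not_mem J x hiJ, mul_zero, add_zero]; exact hunn i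
      apply hmin
      refine ⟨fun i => u i + t * xe i, ⟨?_, hvnn, ?_⟩, ?_⟩
      · intro h0
        have hk := congrFun h0 k
        simp only [Pi.zero_apply] at hk
        rw [hxedef, Stmt8Aux.extJ_not_mem J x hkJ, mul_zero, add_zero] at hk
        exact absurd hk (ne_of_gt (hupos k hkI))
      · rw [hexp t, hc0, ← hqzero]; ring
      · constructor
        · intro i hi
          by_contra hns
          have hui : u i = 0 := not_not.mp hns
          have hiI : i ∉ I := by
            intro h
            exact hns (by rw [← hI]; exact Finset.mem_coe.mpr h)
          have hiJ : i ∉ J := fun h => hiI (hJI h)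
          apply hi
          show u i + t * xe i = 0
          rw [hui, hxedef, Stmt8Aux.extJ_not_mem J x hiJ, mul_zero, add_zero]
        · intro hsub
          have hkey : (i₂ : Fin n) ∈ Supp u := by
            rw [← hI]; exact Finset.mem_coe.mpr (hJI i₂.2)
          apply hsub hkey
          show u i₂.val + t * xe i₂.val = 0
          have hxev : xe i₂.val = x i₂ := by
            rw [hxedef]; exact Stmt8Aux.extJ_mem J x i₂.2
          rw [hxev, htdef, hi₂]
          have hx2 : x i₂ ≠ 0 := ne_of_lt hxi₂
          field_simp
          ring
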